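/- Fix ε ∈ ℂ with ε ≠ 0 and define Φ_ε : ℂ² → ℂ³ by Φ_ε(s,t) = ((s − ε)s, (t − ε)t, st). Then the set of points z ∈ ℂ² at which the complex derivative d(Φ_ε)_z : ℂ² → ℂ³ is not injective is exactly the three-element set {(0, ε/2), (ε/2, 0), (ε/2, ε/2)}. -/

import Mathlib

noncomputable def Lmap (ε : ℂ) (z : ℂ × ℂ) : (ℂ × ℂ) →L[ℂ] ℂ × ℂ × ℂ :=
  ((2 * z.1 - ε) • ContinuousLinearMap.fst ℂ ℂ ℂ).prod
    (((2 * z.2 - ε) • ContinuousLinearMap.snd ℂ ℂ ℂ).prod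
      (z.2 • ContinuousLinearMap.fst ℂ ℂ ℂ + z.1 • ContinuousLinearMap.snd ℂ ℂ ℂ))

lemma Lmap_apply (ε : ℂ) (z v : ℂ × ℂ) :
    Lmap ε z v = ((2 * z.1 - ε) * v.1, (2 * z.2 - ε) * v.2, z.2 * v.1 + z.1 * v.2) := by
  simp [Lmap]

lemma hasD (ε : ℂ) (z : ℂ × ℂ) :
    HasFDerivAt (fun p : ℂ × ℂ => ((p.1 - ε) * p.1, (p.2 - ε) * p.2, p.1 * p.2))
      (Lmap ε z) z := by
  have h1 : HasFDerivAt (fun p : ℂ × ℂ => (p.1 - ε) * p.1)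
      ((z.1 - ε) • ContinuousLinearMap.fst ℂ ℂ ℂ + z.1 • ContinuousLinearMap.fst ℂ ℂ ℂ) z :=
    (hasFDerivAt_fst.sub_const ε).mul hasFDerivAt_fst
  have h2 : HasFDerivAt (fun p : ℂ × ℂ => (p.2 - ε) * p.2)
      ((z.2 - ε) • ContinuousLinearMap.snd ℂ ℂ ℂ + z.2 • ContinuousLinearMap.snd ℂ ℂ ℂ) z :=
    (hasFDerivAt_snd.sub_const ε).mul hasFDerivAt_snd
  have h3 : HasFDerivAt (fun p : ℂ × ℂ => p.1 * p.2)
      (z.1 • ContinuousLinearMap.snd ℂ ℂ ℂ + z.2 • ContinuousLinearMap.fst ℂ ℂ ℂ) z :=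
    hasFDerivAt_fst.mul hasFDerivAt_snd
  have h := HasFDerivAt.prodMk h1 (HasFDerivAt.prodMk h2 h3)
  refine h.congr_fderiv ?_
  refine ContinuousLinearMap.ext fun v => ?_
  simp [Lmap_apply, Prod.ext_iff]
  constructor
  · ring
  constructor
  · ring
  · ring

/-- The deformation `Φ_ε(s,t) = ((s−ε)s, (t−ε)t, st)` of the `A₁`-germ has exactly
three singular points (cross caps): `(0, ε/2)`, `(ε/2, 0)` and `(ε/2, ε/2)`. -/
theorem stmt_16 (ε : ℂ) (hε : ε ≠ 0) (Φ : ℂ × ℂ → ℂ × ℂ × ℂ)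
    (hΦ : ∀ s t : ℂ, Φ (s, t) = ((s - ε) * s, (t - ε) * t, s * t)) :
    {z : ℂ × ℂ | ¬ Function.Injective (fderiv ℂ Φ z)} =
      {((0 : ℂ), ε / 2), (ε / 2, (0 : ℂ)), (ε / 2, ε / 2)} := by
  have hΦ' : Φ = fun p : ℂ × ℂ => ((p.1 - ε) * p.1, (p.2 - ε) * p.2, p.1 * p.2) := by
    funext p; obtain ⟨s, t⟩ := p; exact hΦ s t
  subst hΦ'
  ext z
  obtain ⟨s, t⟩ := z
  have hd := (hasD ε (s, t)).fderiv
  simp only [Set.mem_setOf_eq, hd, Set.mem_insert_iff, Set.mem_singleton_iff, Prod.mk.injEq]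
  rw [injective_iff_map_eq_zero]
  push_neg
  constructor
  · rintro ⟨⟨h, k⟩, hL, hne⟩
    rw [Lmap_apply] at hL
    rw [Prod.ext_iff, Prod.ext_iff] at hL
    simp only [Prod.fst_zero, Prod.snd_zero] at hL
    obtain ⟨e1, e2, e3⟩ := hL
    by_cases hh : h = 0
    · have hk : k ≠ 0 := fun hk => hne (by simp [hh, hk, Prod.ext_iff])
      have ht : t = ε / 2 := by
        have := mul_eq_zero.1 e2
        rcases this with h' | h'
        · field_simp; linear_combination h'
        · exact absurd h' hk
      have hs : s = 0 := by
        have : s * k = 0 := by rw [hh] at e3; simpa using e3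
        rcases mul_eq_zero.1 this with h' | h'
        · exact h'
        · exact absurd h' hk
      left; exact ⟨hs, ht⟩
    · have hs : s = ε / 2 := by
        rcases mul_eq_zero.1 e1 with h' | h'
        · field_simp; linear_combination h'
        · exact absurd h' hh
      by_cases hk : k = 0
      · have ht : t = 0 := by
          have : t * h = 0 := by rw [hk] at e3; simpa using e3
          rcases mul_eq_zero.1 this with h' | h'
          · exact h'
          · exact absurd h' hh
        right; left; exact ⟨hs, ht⟩
      · have ht : t = ε / 2 := by
          rcases mul_eq_zero.1 e2 with h' | h'
          · field_simp; linear_combination h'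
          · exact absurd h' hk
        right; right; exact ⟨hs, ht⟩
  · rintro (⟨hs, ht⟩ | ⟨hs, ht⟩ | ⟨hs, ht⟩)
    · refine ⟨(0, 1), ?_, by simp [Prod.ext_iff]⟩
      subst hs ht; rw [Lmap_apply]
      refine Prod.ext ?_ (Prod.ext ?_ ?_) <;> simp <;> ring_nf
    · refine ⟨(1, 0), ?_, by simp [Prod.ext_iff]⟩
      subst hs ht; rw [Lmap_apply]
      refine Prod.ext ?_ (Prod.ext ?_ ?_) <;> simp <;> ring_nf
    · refine ⟨(1, -1), ?_, by simp [Prod.ext_iff]⟩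
      subst hs ht; rw [Lmap_apply]
      refine Prod.ext ?_ (Prod.ext ?_ ?_) <;> simp <;> ring_nf
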